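/- arXiv:1812.11392 — 4 statements merged into one kernel-verified Lean document; each statement's English description precedes it below -/
import Mathlib

section
/- If f ∈ L¹(ℝⁿ) is supported on the cube Q(x,r) and has mean zero (∫_{Q(x,r)} f = 0), and K is a kernel satisfying the smoothness estimate |K(y,z) - K(y,x)| ≤ C |x-z|^δ / |x-y|^{n+δ} whenever |x-z| ≤ (1/2)|x-y| for some δ > 0, then ∫_{ℝⁿ \ Q(x, 2√n r)} |Tf(y)| dy ≤ C' ‖f‖_{L¹}, where Tf(y) = ∫ K(y,z) f(z) dz for y outside the support of f, and C' depends only on n, δ, C. -/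
open MeasureTheory Filter Set
open scoped ENNReal

noncomputable section

open Metric

set_option maxHeartbeats 1000000

/-- The axis-parallel cube centered at `x` with side length `r`. -/
def cube {n : ℕ} (x : EuclideanSpace ℝ (Fin n)) (r : ℝ) :
    Set (EuclideanSpace ℝ (Fin n)) := {y | ∀ i, |y i - x i| < r / 2}

lemma norm_sub_le_of_mem_cube {n : ℕ} {x z : EuclideanSpace ℝ (Fin n)} {r : ℝ} (hr : 0 ≤ r)
    (hz : z ∈ cube x r) : ‖x - z‖ ≤ Real.sqrt n * r / 2 := by
  rw [EuclideanSpace.norm_eq]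
  have h : ∑ i, ‖(x - z) i‖ ^ 2 ≤ (n : ℝ) * (r / 2) ^ 2 := by
    have : ∀ i ∈ Finset.univ, ‖(x - z) i‖ ^ 2 ≤ (r / 2) ^ 2 := by
      intro i _
      have h1 : |z i - x i| ≤ r / 2 := (hz i).le
      have h2 : ‖(x - z) i‖ = |z i - x i| := by
        simp [PiLp.sub_apply, Real.norm_eq_abs, abs_sub_comm]
      rw [h2]
      apply sq_le_sq' _ h1
      linarith [abs_nonneg (z i - x i)]
    calc ∑ i, ‖(x - z) i‖ ^ 2 ≤ ∑ _i : Fin n, (r / 2) ^ 2 := Finset.sum_le_sum this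
      _ = (n : ℝ) * (r / 2) ^ 2 := by simp [mul_comm]
  calc Real.sqrt (∑ i, ‖(x - z) i‖ ^ 2) ≤ Real.sqrt ((n : ℝ) * (r / 2) ^ 2) :=
        Real.sqrt_le_sqrt h
    _ = Real.sqrt n * (r / 2) := by
        rw [Real.sqrt_mul (Nat.cast_nonneg n), Real.sqrt_sq (by linarith)]
    _ = Real.sqrt n * r / 2 := by ring

lemma le_norm_of_not_mem_cube {n : ℕ} {x y : EuclideanSpace ℝ (Fin n)} {r : ℝ}
    (hy : y ∉ cube x (2 * Real.sqrt n * r)) : Real.sqrt n * r ≤ ‖y - x‖ := by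
  simp only [cube, mem_setOf_eq, not_forall, not_lt] at hy
  obtain ⟨i, hi⟩ := hy
  have h1 : Real.sqrt n * r ≤ |y i - x i| := by
    calc Real.sqrt n * r = 2 * Real.sqrt n * r / 2 := by ring
      _ ≤ |y i - x i| := hi
  have h2 : ‖(y - x) i‖ ≤ ‖y - x‖ := by
    rw [EuclideanSpace.norm_eq]
    have := Finset.single_le_sum (f := fun j => ‖(y - x) j‖ ^ 2)
      (fun j _ => sq_nonneg _) (Finset.mem_univ i)
    calc ‖(y - x) i‖ = Real.sqrt (‖(y - x) i‖ ^ 2) := (Real.sqrt_sq (norm_nonneg _)).symm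
      _ ≤ _ := Real.sqrt_le_sqrt this
  calc Real.sqrt n * r ≤ |y i - x i| := h1
    _ = ‖(y - x) i‖ := by simp [PiLp.sub_apply, Real.norm_eq_abs]
    _ ≤ ‖y - x‖ := h2

lemma cube_measurable {n : ℕ} (x : EuclideanSpace ℝ (Fin n)) (r : ℝ) :
    MeasurableSet (cube x r) := by
  have : cube x r = ⋂ i, {y : EuclideanSpace ℝ (Fin n) | |y i - x i| < r / 2} := by
    ext y; simp [cube]
  rw [this]
  apply MeasurableSet.iInter
  intro i
  have : Measurable fun y : EuclideanSpace ℝ (Fin n) => |y i - x i| := by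
    apply Measurable.abs
    exact ((EuclideanSpace.proj i : EuclideanSpace ℝ (Fin n) →L[ℝ] ℝ).measurable).sub_const _
  exact measurableSet_lt this measurable_const

lemma pointwise_bound {n : ℕ} (hn : 0 < n) {δ C : ℝ} (hδ : 0 < δ) (hC : 0 < C)
    (K : EuclideanSpace ℝ (Fin n) → EuclideanSpace ℝ (Fin n) → ℂ)
    (f : EuclideanSpace ℝ (Fin n) → ℂ) (x : EuclideanSpace ℝ (Fin n)) (r : ℝ)
    (hr : 0 < r) (hf : Integrable f)
    (hK : ∀ y z : EuclideanSpace ℝ (Fin n), y ≠ x → ‖x - z‖ ≤ ‖x - y‖ / 2 →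
      ‖K y z - K y x‖ ≤ C * ‖x - z‖ ^ δ / ‖x - y‖ ^ ((n : ℝ) + δ))
    (hsupp : Function.support f ⊆ cube x r) (hmean : (∫ z, f z) = 0)
    {y : EuclideanSpace ℝ (Fin n)} (hy : y ∉ cube x (2 * Real.sqrt n * r))
    (hyx : Real.sqrt n * r ≤ ‖y - x‖) :
    ‖∫ z, K y z * f z‖ ≤
      (C * (Real.sqrt n * r / 2) ^ δ * ∫ z, ‖f z‖) * ‖y - x‖ ^ (-((n : ℝ) + δ)) := by
  have hsq : (0:ℝ) < Real.sqrt n := Real.sqrt_pos.mpr (Nat.cast_pos.mpr hn)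
  have hR : (0:ℝ) < Real.sqrt n * r := by positivity
  have hypos : (0:ℝ) < ‖y - x‖ := lt_of_lt_of_le hR hyx
  have hyne : y ≠ x := by
    intro h; rw [h, sub_self, norm_zero] at hypos; exact lt_irrefl 0 hypos
  have hI : (0:ℝ) ≤ ∫ z, ‖f z‖ := integral_nonneg fun z => norm_nonneg _
  set M : ℝ := C * (Real.sqrt n * r / 2) ^ δ * ‖y - x‖ ^ (-((n : ℝ) + δ)) with hM
  have hM0 : 0 ≤ M := by positivity
  by_cases hint : Integrable (fun z => K y z * f z) volume
  · have h0 : (∫ z, K y z * f z) = ∫ z, (K y z - K y x) * f z := by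
      have heq : (fun z => (K y z - K y x) * f z) =
          fun z => K y z * f z - K y x * f z := by funext z; ring
      rw [heq, integral_sub hint (hf.const_mul _), integral_const_mul, hmean, mul_zero, sub_zero]
    have hptw : ∀ z, ‖(K y z - K y x) * f z‖ ≤ M * ‖f z‖ := by
      intro z
      rw [norm_mul]
      by_cases hz : f z = 0
      · simp [hz]
      · have hzc : z ∈ cube x r := hsupp (Function.mem_support.mpr hz)
        have hxz : ‖x - z‖ ≤ Real.sqrt n * r / 2 := norm_sub_le_of_mem_cube hr.le hzc
        have hxy : ‖x - y‖ = ‖y - x‖ := norm_sub_rev x y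
        have hcond : ‖x - z‖ ≤ ‖x - y‖ / 2 := by rw [hxy]; linarith
        have hk := hK y z hyne hcond
        have hk2 : ‖K y z - K y x‖ ≤ M := by
          rw [hM]
          calc ‖K y z - K y x‖ ≤ C * ‖x - z‖ ^ δ / ‖x - y‖ ^ ((n : ℝ) + δ) := hk
            _ ≤ C * (Real.sqrt n * r / 2) ^ δ / ‖x - y‖ ^ ((n : ℝ) + δ) := by
                have hcpos : (0:ℝ) < ‖x - y‖ ^ ((n : ℝ) + δ) := by
                  rw [hxy]; exact Real.rpow_pos_of_pos hypos _
                apply (div_le_div_iff_of_pos_right hcpos).mpr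
                exact mul_le_mul_of_nonneg_left
                  (Real.rpow_le_rpow (norm_nonneg _) hxz hδ.le) hC.le
            _ = C * (Real.sqrt n * r / 2) ^ δ * ‖y - x‖ ^ (-((n : ℝ) + δ)) := by
                rw [hxy, Real.rpow_neg hypos.le, div_eq_mul_inv]
        exact mul_le_mul_of_nonneg_right hk2 (norm_nonneg _)
    rw [h0]
    calc ‖∫ z, (K y z - K y x) * f z‖ ≤ ∫ z, M * ‖f z‖ :=
          norm_integral_le_of_norm_le (hf.norm.const_mul M) (Eventually.of_forall hptw)
      _ = M * ∫ z, ‖f z‖ := integral_const_mul M _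
      _ = (C * (Real.sqrt n * r / 2) ^ δ * ∫ z, ‖f z‖) * ‖y - x‖ ^ (-((n : ℝ) + δ)) := by
          rw [hM]; ring
  · rw [integral_undef hint, norm_zero]
    positivity

lemma radial_bound (n : ℕ) (hn : 0 < n) (δ : ℝ) (hδ : 0 < δ)
    (x : EuclideanSpace ℝ (Fin n)) (R : ℝ) (hR : 0 < R) :
    ∫⁻ y in {y : EuclideanSpace ℝ (Fin n) | R ≤ ‖y - x‖},
        ENNReal.ofReal (‖y - x‖ ^ (-((n : ℝ) + δ))) ≤
      ENNReal.ofReal ((2:ℝ) ^ (n:ℝ) * R ^ (-δ) * (1 - 2 ^ (-δ))⁻¹) *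
        volume (ball (0 : EuclideanSpace ℝ (Fin n)) 1) := by
  have hnt : Nontrivial (EuclideanSpace ℝ (Fin n)) := by
    have : Module.finrank ℝ (EuclideanSpace ℝ (Fin n)) = n := finrank_euclideanSpace_fin
    exact Module.nontrivial_of_finrank_pos (R := ℝ) (by omega : 0 < Module.finrank ℝ (EuclideanSpace ℝ (Fin n)))
  set A : ℕ → Set (EuclideanSpace ℝ (Fin n)) := fun k => ball x (2 ^ (k+1) * R) \ ball x (2 ^ k * R) with hA
  have hsub : {y : EuclideanSpace ℝ (Fin n) | R ≤ ‖y - x‖} ⊆ ⋃ k, A k := by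
    intro y hy
    simp only [mem_setOf_eq] at hy
    have hpos : 1 ≤ ‖y - x‖ / R := (one_le_div hR).mpr hy
    set t := ‖y - x‖ / R with ht
    have htfl : 1 ≤ ⌊t⌋₊ := (Nat.one_le_floor_iff t).mpr hpos
    set k := Nat.log 2 ⌊t⌋₊ with hk
    have h1 : (2:ℝ) ^ k ≤ t := by
      calc (2:ℝ) ^ k ≤ (⌊t⌋₊ : ℝ) := by
            exact_mod_cast Nat.cast_le.mpr (Nat.pow_log_le_self 2 (by omega))
        _ ≤ t := Nat.floor_le (by linarith)
    have h2 : t < (2:ℝ) ^ (k+1) := by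
      calc t < (⌊t⌋₊ : ℝ) + 1 := Nat.lt_floor_add_one t
        _ ≤ (2:ℝ) ^ (k+1) := by
            exact_mod_cast Nat.cast_le.mpr (Nat.lt_pow_succ_log_self (by norm_num) ⌊t⌋₊)
    have hyx : ‖y - x‖ = t * R := (div_mul_cancel₀ _ hR.ne').symm
    refine mem_iUnion.mpr ⟨k, ?_, ?_⟩
    · rw [mem_ball, dist_eq_norm, hyx]
      nlinarith
    · rw [mem_ball, dist_eq_norm, not_lt, hyx]
      nlinarith
  -- bound integrand on each annulus and sum
  have hbound : ∀ k : ℕ, (∫⁻ y in A k, ENNReal.ofReal (‖y - x‖ ^ (-((n : ℝ) + δ)))) ≤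
      ENNReal.ofReal ((2:ℝ)^(n:ℝ) * R^(-δ) * ((2:ℝ)^(-δ))^k) * volume (ball (0:EuclideanSpace ℝ (Fin n)) 1) := by
    intro k
    have hb : (0:ℝ) < 2 ^ k * R := by positivity
    have step1 : (∫⁻ y in A k, ENNReal.ofReal (‖y - x‖ ^ (-((n : ℝ) + δ)))) ≤
        ENNReal.ofReal (((2:ℝ) ^ k * R) ^ (-((n : ℝ) + δ))) * volume (A k) := by
      rw [← setLIntegral_const]
      apply setLIntegral_mono' (MeasurableSet.diff measurableSet_ball measurableSet_ball)
      intro y hy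
      apply ENNReal.ofReal_le_ofReal
      apply Real.rpow_le_rpow_of_nonpos hb
      · rw [← dist_eq_norm]; exact not_lt.mp (fun h => hy.2 (mem_ball.mpr h))
      · linarith [Nat.cast_nonneg (α := ℝ) n]
    have step2 : volume (A k) ≤ ENNReal.ofReal (((2:ℝ)^(k+1) * R) ^ n) * volume (ball (0:EuclideanSpace ℝ (Fin n)) 1) := by
      calc volume (A k) ≤ volume (ball x (2 ^ (k+1) * R)) := measure_mono diff_subset
        _ = ENNReal.ofReal (((2:ℝ)^(k+1) * R) ^ Module.finrank ℝ (EuclideanSpace ℝ (Fin n))) * volume (ball (0:EuclideanSpace ℝ (Fin n)) 1) :=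
            Measure.addHaar_ball volume x (by positivity)
        _ = ENNReal.ofReal (((2:ℝ)^(k+1) * R) ^ n) * volume (ball (0:EuclideanSpace ℝ (Fin n)) 1) := by
            rw [finrank_euclideanSpace_fin]
    calc (∫⁻ y in A k, ENNReal.ofReal (‖y - x‖ ^ (-((n : ℝ) + δ))))
        ≤ ENNReal.ofReal (((2:ℝ) ^ k * R) ^ (-((n : ℝ) + δ))) *
            (ENNReal.ofReal (((2:ℝ)^(k+1) * R) ^ n) * volume (ball (0:EuclideanSpace ℝ (Fin n)) 1)) := by
          exact step1.trans (mul_le_mul_right step2 _)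
      _ = ENNReal.ofReal (((2:ℝ) ^ k * R) ^ (-((n : ℝ) + δ)) * ((2:ℝ)^(k+1) * R) ^ n) *
            volume (ball (0:EuclideanSpace ℝ (Fin n)) 1) := by
          rw [← mul_assoc, ← ENNReal.ofReal_mul (by positivity)]
      _ = ENNReal.ofReal ((2:ℝ)^(n:ℝ) * R^(-δ) * ((2:ℝ)^(-δ))^k) * volume (ball (0:EuclideanSpace ℝ (Fin n)) 1) := by
          congr 1
          congr 1
          set a := (2:ℝ) ^ k * R with ha'
          have ha : (0:ℝ) < a := hb
          have e0 : ((2:ℝ)^(k+1) * R) = 2 * a := by rw [ha', pow_succ]; ring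
          have e1 : ((2:ℝ)^k)^(-δ) = ((2:ℝ)^(-δ))^k := by
            rw [← Real.rpow_natCast (2:ℝ) k, ← Real.rpow_natCast ((2:ℝ)^(-δ)) k,
              ← Real.rpow_mul (by norm_num), ← Real.rpow_mul (by norm_num), mul_comm]
          rw [e0, ← Real.rpow_natCast (2 * a) n,
            show -((n:ℝ)+δ) = -(n:ℝ) + -δ by ring]
          calc a ^ (-(n:ℝ) + -δ) * (2*a) ^ (n:ℝ)
              = (a ^ (-(n:ℝ)) * a ^ (-δ)) * ((2:ℝ)^(n:ℝ) * a^(n:ℝ)) := by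
                rw [← Real.rpow_add ha, Real.mul_rpow (by norm_num) ha.le]
            _ = (2:ℝ)^(n:ℝ) * a^(-δ) * (a ^ (-(n:ℝ)) * a^(n:ℝ)) := by ring
            _ = (2:ℝ)^(n:ℝ) * a^(-δ) := by
                rw [← Real.rpow_add ha]; norm_num
            _ = (2:ℝ)^(n:ℝ) * (((2:ℝ)^k)^(-δ) * R^(-δ)) := by
                rw [ha', Real.mul_rpow (by positivity) hR.le]
            _ = (2:ℝ)^(n:ℝ) * R^(-δ) * ((2:ℝ)^(-δ))^k := by rw [e1]; ring
  -- now sum up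
  have hsum : ∑' k : ℕ, (ENNReal.ofReal ((2:ℝ)^(n:ℝ) * R^(-δ) * ((2:ℝ)^(-δ))^k) *
      volume (ball (0:EuclideanSpace ℝ (Fin n)) 1)) ≤
      ENNReal.ofReal ((2:ℝ) ^ (n:ℝ) * R ^ (-δ) * (1 - 2 ^ (-δ))⁻¹) * volume (ball (0:EuclideanSpace ℝ (Fin n)) 1) := by
    have h2d : (0:ℝ) < (2:ℝ)^(-δ) := by positivity
    have h2d1 : (2:ℝ)^(-δ) < 1 := by
      rw [← Real.rpow_zero 2]
      exact Real.rpow_lt_rpow_of_exponent_lt one_lt_two (by linarith)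
    have key : ∑' k : ℕ, ENNReal.ofReal ((2:ℝ)^(n:ℝ) * R^(-δ) * ((2:ℝ)^(-δ))^k)
        = ENNReal.ofReal ((2:ℝ)^(n:ℝ) * R^(-δ)) * (1 - ENNReal.ofReal ((2:ℝ)^(-δ)))⁻¹ := by
      have : ∀ k : ℕ, ENNReal.ofReal ((2:ℝ)^(n:ℝ) * R^(-δ) * ((2:ℝ)^(-δ))^k)
          = ENNReal.ofReal ((2:ℝ)^(n:ℝ) * R^(-δ)) * (ENNReal.ofReal ((2:ℝ)^(-δ)))^k := by
        intro k
        rw [ENNReal.ofReal_mul (by positivity), ENNReal.ofReal_pow h2d.le]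
      simp_rw [this]
      rw [ENNReal.tsum_mul_left, ENNReal.tsum_geometric]
    have inv_eq : (1 - ENNReal.ofReal ((2:ℝ)^(-δ)))⁻¹ = ENNReal.ofReal ((1 - (2:ℝ)^(-δ))⁻¹) := by
      rw [← ENNReal.ofReal_one, ← ENNReal.ofReal_sub _ h2d.le,
        ENNReal.ofReal_inv_of_pos (by linarith)]
    rw [ENNReal.tsum_mul_right, key, inv_eq, ← ENNReal.ofReal_mul (by positivity)]
  refine le_trans (lintegral_mono_set hsub) ?_
  calc ∫⁻ y in ⋃ k, A k, ENNReal.ofReal (‖y - x‖ ^ (-((n : ℝ) + δ)))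
      ≤ ∑' k : ℕ, ∫⁻ y in A k, ENNReal.ofReal (‖y - x‖ ^ (-((n : ℝ) + δ))) :=
        lintegral_iUnion_le _ _
    _ ≤ ∑' k : ℕ, (ENNReal.ofReal ((2:ℝ)^(n:ℝ) * R^(-δ) * ((2:ℝ)^(-δ))^k) *
          volume (ball (0:EuclideanSpace ℝ (Fin n)) 1)) := ENNReal.tsum_le_tsum hbound
    _ ≤ _ := hsum

/-- Lemma 1: if `f ∈ L¹` is supported on `Q(x,r)` with mean zero and `K` satisfies the
smoothness estimate centered at `x`, then `∫_{ℝⁿ \ Q(x, 2√n r)} |Tf| ≤ C' ‖f‖₁`. -/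
theorem stmt0 (n : ℕ) (hn : 0 < n) (δ C : ℝ) (hδ : 0 < δ) (hC : 0 < C) :
    ∃ C' > (0 : ℝ), ∀ (K : EuclideanSpace ℝ (Fin n) → EuclideanSpace ℝ (Fin n) → ℂ)
      (f : EuclideanSpace ℝ (Fin n) → ℂ) (x : EuclideanSpace ℝ (Fin n)) (r : ℝ),
      0 < r → Integrable f →
      (∀ y z : EuclideanSpace ℝ (Fin n), y ≠ x → ‖x - z‖ ≤ ‖x - y‖ / 2 →
        ‖K y z - K y x‖ ≤ C * ‖x - z‖ ^ δ / ‖x - y‖ ^ ((n : ℝ) + δ)) →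
      Function.support f ⊆ cube x r →
      (∫ z, f z) = 0 →
      (∫⁻ y in (cube x (2 * Real.sqrt n * r))ᶜ, (‖∫ z, K y z * f z‖₊ : ℝ≥0∞)) ≤
        ENNReal.ofReal (C' * ∫ z, ‖f z‖) := by
  have h2d : (0:ℝ) < (2:ℝ) ^ (-δ) := Real.rpow_pos_of_pos (by norm_num) _
  have h2d1 : (2:ℝ) ^ (-δ) < 1 := by
    rw [← Real.rpow_zero 2]
    exact Real.rpow_lt_rpow_of_exponent_lt one_lt_two (by linarith)
  set B : ℝ := (volume (ball (0 : EuclideanSpace ℝ (Fin n)) 1)).toReal with hB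
  have hBpos : 0 < B := by
    apply ENNReal.toReal_pos (measure_ball_pos volume _ one_pos).ne'
      measure_ball_lt_top.ne
  have hu : (0:ℝ) < (1 - 2 ^ (-δ))⁻¹ := inv_pos.mpr (by linarith)
  refine ⟨C * 2 ^ (-δ) * 2 ^ (n:ℝ) * (1 - 2 ^ (-δ))⁻¹ * B,
    by have h2n : (0:ℝ) < (2:ℝ) ^ (n:ℝ) := Real.rpow_pos_of_pos (by norm_num) _
       exact mul_pos (mul_pos (mul_pos (mul_pos hC h2d) h2n) hu) hBpos, ?_⟩
  intro K f x r hr hf hK hsupp hmean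
  have hsq : (0:ℝ) < Real.sqrt n := Real.sqrt_pos.mpr (Nat.cast_pos.mpr hn)
  set a : ℝ := Real.sqrt n * r with ha'
  have ha : (0:ℝ) < a := by positivity
  have hI : (0:ℝ) ≤ ∫ z, ‖f z‖ := integral_nonneg fun z => norm_nonneg _
  set I : ℝ := ∫ z, ‖f z‖ with hI'
  -- step 1: pointwise bound on the complement
  have step1 : (∫⁻ y in (cube x (2 * Real.sqrt n * r))ᶜ, (‖∫ z, K y z * f z‖₊ : ℝ≥0∞)) ≤
      ∫⁻ y in (cube x (2 * Real.sqrt n * r))ᶜ,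
        ENNReal.ofReal (C * (a / 2) ^ δ * I) * ENNReal.ofReal (‖y - x‖ ^ (-((n:ℝ) + δ))) := by
    apply setLIntegral_mono' (cube_measurable x _).compl
    intro y hy
    have hyx : a ≤ ‖y - x‖ := le_norm_of_not_mem_cube hy
    have hpt := pointwise_bound hn hδ hC K f x r hr hf hK hsupp hmean hy hyx
    rw [← ENNReal.ofReal_mul (by positivity), ← enorm_eq_nnnorm, ← ofReal_norm]
    exact ENNReal.ofReal_le_ofReal hpt
  -- step 2: pull out the constant and use the radial bound
  have step2 : (∫⁻ y in (cube x (2 * Real.sqrt n * r))ᶜ,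
        ENNReal.ofReal (C * (a / 2) ^ δ * I) * ENNReal.ofReal (‖y - x‖ ^ (-((n:ℝ) + δ)))) ≤
      ENNReal.ofReal (C * (a / 2) ^ δ * I) *
        (ENNReal.ofReal ((2:ℝ) ^ (n:ℝ) * a ^ (-δ) * (1 - 2 ^ (-δ))⁻¹) *
          volume (ball (0 : EuclideanSpace ℝ (Fin n)) 1)) := by
    rw [lintegral_const_mul' _ _ ENNReal.ofReal_ne_top]
    apply mul_le_mul_right
    have hsub : (cube x (2 * Real.sqrt n * r))ᶜ ⊆
        {y : EuclideanSpace ℝ (Fin n) | a ≤ ‖y - x‖} :=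
      fun y hy => le_norm_of_not_mem_cube hy
    exact (lintegral_mono_set hsub).trans (radial_bound n hn δ hδ x a ha)
  refine step1.trans (step2.trans ?_)
  -- step 3: arithmetic
  have hvol : volume (ball (0 : EuclideanSpace ℝ (Fin n)) 1) = ENNReal.ofReal B :=
    (ENNReal.ofReal_toReal measure_ball_lt_top.ne).symm
  rw [hvol, ← ENNReal.ofReal_mul (by positivity), ← ENNReal.ofReal_mul (by positivity)]
  apply ENNReal.ofReal_le_ofReal
  have hmain : (a / 2) ^ δ * a ^ (-δ) = 2 ^ (-δ) := by
    rw [Real.div_rpow ha.le (by norm_num), Real.rpow_neg ha.le,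
      Real.rpow_neg (by norm_num : (0:ℝ) ≤ 2)]
    have h1 : a ^ δ ≠ 0 := (Real.rpow_pos_of_pos ha δ).ne'
    have h2 : (2:ℝ) ^ δ ≠ 0 := (Real.rpow_pos_of_pos (by norm_num) δ).ne'
    field_simp
  calc C * (a / 2) ^ δ * I * ((2:ℝ) ^ (n:ℝ) * a ^ (-δ) * (1 - 2 ^ (-δ))⁻¹ * B)
      = C * ((a / 2) ^ δ * a ^ (-δ)) * (2:ℝ) ^ (n:ℝ) * (1 - 2 ^ (-δ))⁻¹ * B * I := by ring
    _ = C * 2 ^ (-δ) * 2 ^ (n:ℝ) * (1 - 2 ^ (-δ))⁻¹ * B * I := by rw [hmain]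
    _ ≤ C * 2 ^ (-δ) * 2 ^ (n:ℝ) * (1 - 2 ^ (-δ))⁻¹ * B * I := le_refl _
end
end

section
/- For any finite collection of cubes Q(x₁, r₁), …, Q(x_N, r_N) in ℝⁿ and any a > 1, the Lebesgue measure satisfies |⋃_{j=1}^N Q(x_j, a r_j)| ≤ aⁿ |⋃_{j=1}^N Q(x_j, r_j)|. -/
open MeasureTheory Filter Set
open scoped ENNReal

noncomputable section

lemma biUnion_filter_eq {α : Type*} {N : ℕ} (Q : Fin N → Prop) [DecidablePred Q]
    (f : Fin N → Set α) : (⋃ j ∈ Finset.univ.filter Q, f j) = ⋃ j, ⋃ _ : Q j, f j := by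
  ext t; simp

/-- 1D dilation lemma for finite unions of open intervals, Finset version. -/
lemma lemA_fin (a : ℝ) (ha : 1 ≤ a) {N : ℕ} (s : Finset (Fin N)) :
    ∀ c r : Fin N → ℝ,
      volume (⋃ j ∈ s, Ioo (c j - a * r j / 2) (c j + a * r j / 2))
        ≤ ENNReal.ofReal a * volume (⋃ j ∈ s, Ioo (c j - r j / 2) (c j + r j / 2)) := by
  induction s using Finset.strongInduction with
  | _ s IH =>
    intro c r
    by_cases hex : ∃ i ∈ s, ∃ j ∈ s, i ≠ j ∧
        (Ioo (c i - r i / 2) (c i + r i / 2) ∩ Ioo (c j - r j / 2) (c j + r j / 2)).Nonempty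
    · obtain ⟨i, hi, j, hj, hij, t, hti, htj⟩ := hex
      simp only [mem_Ioo] at hti htj
      set m := min (c i - r i / 2) (c j - r j / 2) with hm
      set M := max (c i + r i / 2) (c j + r j / 2) with hM
      set c' := Function.update c i ((m + M) / 2) with hc'
      set r' := Function.update r i (M - m) with hr'
      have hunion : Ioo (c i - r i / 2) (c i + r i / 2) ∪ Ioo (c j - r j / 2) (c j + r j / 2)
          = Ioo m M := Set.Ioo_union_Ioo' (by linarith [hti.2, htj.1]) (by linarith [hti.1, htj.2])
      have hIoo : Ioo ((m + M) / 2 - (M - m) / 2) ((m + M) / 2 + (M - m) / 2) = Ioo m M := by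
        rw [show (m + M) / 2 - (M - m) / 2 = m by ring, show (m + M) / 2 + (M - m) / 2 = M by ring]
      have hset : (⋃ k ∈ s.erase j, Ioo (c' k - r' k / 2) (c' k + r' k / 2))
          = ⋃ k ∈ s, Ioo (c k - r k / 2) (c k + r k / 2) := by
        ext u
        simp only [Set.mem_iUnion, exists_prop]
        constructor
        · rintro ⟨k, hk, hu⟩
          rcases eq_or_ne k i with hki | hki
          · rw [hki] at hu
            rw [hc', hr'] at hu
            simp only [Function.update_self] at hu
            rw [hIoo, ← hunion] at hu
            rcases hu with hu | hu
            · exact ⟨i, hi, hu⟩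
            · exact ⟨j, hj, hu⟩
          · rw [hc', hr', Function.update_of_ne hki, Function.update_of_ne hki] at hu
            exact ⟨k, (Finset.mem_erase.1 hk).2, hu⟩
        · rintro ⟨k, hk, hu⟩
          have hmem : i ∈ s.erase j := Finset.mem_erase.2 ⟨hij, hi⟩
          have hval : Ioo (c' i - r' i / 2) (c' i + r' i / 2) = Ioo m M := by
            rw [hc', hr']; simp only [Function.update_self]; exact hIoo
          rcases eq_or_ne k j with hkj | hkj
          · rw [hkj] at hu
            exact ⟨i, hmem, by rw [hval, ← hunion]; exact Or.inr hu⟩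
          · rcases eq_or_ne k i with hki | hki
            · rw [hki] at hu
              exact ⟨i, hmem, by rw [hval, ← hunion]; exact Or.inl hu⟩
            · refine ⟨k, Finset.mem_erase.2 ⟨hkj, hk⟩, ?_⟩
              rw [hc', hr', Function.update_of_ne hki, Function.update_of_ne hki]
              exact hu
      have key : ∀ k, m ≤ c k - r k / 2 → c k + r k / 2 ≤ M →
          Ioo (c k - a * r k / 2) (c k + a * r k / 2)
            ⊆ Ioo ((m + M) / 2 - a * (M - m) / 2) ((m + M) / 2 + a * (M - m) / 2) := by
        intro k h1 h2
        have h3 : (c k - r k / 2 - m) + (M - (c k + r k / 2))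
            ≤ a * ((c k - r k / 2 - m) + (M - (c k + r k / 2))) :=
          le_mul_of_one_le_left (by linarith) ha
        have h4 : a * (M - m)
            = a * r k + a * ((c k - r k / 2 - m) + (M - (c k + r k / 2))) := by ring
        apply Set.Ioo_subset_Ioo <;> linarith
      have hsub : (⋃ k ∈ s, Ioo (c k - a * r k / 2) (c k + a * r k / 2))
          ⊆ ⋃ k ∈ s.erase j, Ioo (c' k - a * r' k / 2) (c' k + a * r' k / 2) := by
        intro u hu
        simp only [Set.mem_iUnion, exists_prop] at hu ⊢
        obtain ⟨k, hk, hu⟩ := hu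
        have hmem : i ∈ s.erase j := Finset.mem_erase.2 ⟨hij, hi⟩
        have hval : ∀ v, v ∈ Ioo ((m + M) / 2 - a * (M - m) / 2) ((m + M) / 2 + a * (M - m) / 2)
            → v ∈ Ioo (c' i - a * r' i / 2) (c' i + a * r' i / 2) := by
          intro v hv
          rw [hc', hr']; simpa only [Function.update_self] using hv
        rcases eq_or_ne k j with hkj | hkj
        · rw [hkj] at hu
          exact ⟨i, hmem, hval u (key j (min_le_right _ _) (le_max_right _ _) hu)⟩
        · rcases eq_or_ne k i with hki | hki
          · rw [hki] at hu
            exact ⟨i, hmem, hval u (key i (min_le_left _ _) (le_max_left _ _) hu)⟩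
          · refine ⟨k, Finset.mem_erase.2 ⟨hkj, hk⟩, ?_⟩
            rw [hc', hr', Function.update_of_ne hki, Function.update_of_ne hki]
            exact hu
      calc volume (⋃ k ∈ s, Ioo (c k - a * r k / 2) (c k + a * r k / 2))
          ≤ volume (⋃ k ∈ s.erase j, Ioo (c' k - a * r' k / 2) (c' k + a * r' k / 2)) :=
            measure_mono hsub
        _ ≤ ENNReal.ofReal a * volume (⋃ k ∈ s.erase j, Ioo (c' k - r' k / 2) (c' k + r' k / 2)) :=
            IH (s.erase j) (Finset.erase_ssubset hj) c' r'
        _ = ENNReal.ofReal a * volume (⋃ k ∈ s, Ioo (c k - r k / 2) (c k + r k / 2)) := by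
            rw [hset]
    · push_neg at hex
      have hdisj : (s : Set (Fin N)).PairwiseDisjoint
          fun j => Ioo (c j - r j / 2) (c j + r j / 2) := by
        intro i hi j hj hij
        rw [Function.onFun, Set.disjoint_iff_inter_eq_empty]
        exact hex i hi j hj hij
      calc volume (⋃ k ∈ s, Ioo (c k - a * r k / 2) (c k + a * r k / 2))
          ≤ ∑ k ∈ s, volume (Ioo (c k - a * r k / 2) (c k + a * r k / 2)) :=
            measure_biUnion_finset_le s _
        _ = ∑ k ∈ s, ENNReal.ofReal a * volume (Ioo (c k - r k / 2) (c k + r k / 2)) := by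
            refine Finset.sum_congr rfl fun k _ => ?_
            rw [Real.volume_Ioo, Real.volume_Ioo,
              show c k + a * r k / 2 - (c k - a * r k / 2) = a * r k by ring,
              show c k + r k / 2 - (c k - r k / 2) = r k by ring,
              ENNReal.ofReal_mul (by linarith)]
        _ = ENNReal.ofReal a * ∑ k ∈ s, volume (Ioo (c k - r k / 2) (c k + r k / 2)) :=
            (Finset.mul_sum _ _ _).symm
        _ = ENNReal.ofReal a * volume (⋃ k ∈ s, Ioo (c k - r k / 2) (c k + r k / 2)) := by
            rw [measure_biUnion_finset hdisj fun k _ => measurableSet_Ioo]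

/-- 1D dilation lemma, predicate version. -/
lemma lemA_pred (a : ℝ) (ha : 1 ≤ a) {N : ℕ} (c r : Fin N → ℝ) (Q : Fin N → Prop) :
    volume (⋃ j, ⋃ _ : Q j, Ioo (c j - a * r j / 2) (c j + a * r j / 2))
      ≤ ENNReal.ofReal a * volume (⋃ j, ⋃ _ : Q j, Ioo (c j - r j / 2) (c j + r j / 2)) := by
  classical
  have h1 := biUnion_filter_eq Q fun j => Ioo (c j - a * r j / 2) (c j + a * r j / 2)
  have h2 := biUnion_filter_eq Q fun j => Ioo (c j - r j / 2) (c j + r j / 2)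
  rw [← h1, ← h2]
  exact lemA_fin a ha _ c r

/-- Main dilation lemma for boxes in `Fin n → ℝ`. -/
lemma pi_dilate (a : ℝ) (ha : 1 ≤ a) :
    ∀ (n N : ℕ) (x r : Fin N → Fin n → ℝ) (P : Fin N → Prop),
      volume (⋃ j, ⋃ _ : P j, univ.pi fun i => Ioo (x j i - a * r j i / 2) (x j i + a * r j i / 2))
        ≤ ENNReal.ofReal (a ^ n) *
          volume (⋃ j, ⋃ _ : P j,
            univ.pi fun i => Ioo (x j i - r j i / 2) (x j i + r j i / 2)) := by
  intro n
  induction n with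
  | zero =>
    intro N x r P
    have h0 : ∀ f : Fin 0 → Set ℝ, univ.pi f = univ := fun f => by ext y; simp
    simp only [h0, pow_zero, ENNReal.ofReal_one, one_mul, le_refl]
  | succ n IH =>
    intro N x r P
    set e := MeasurableEquiv.piFinSuccAbove (fun _ : Fin (n + 1) => ℝ) 0 with he
    have hmp : MeasurePreserving e (volume : Measure (Fin (n + 1) → ℝ))
        ((volume : Measure ℝ).prod (volume : Measure (Fin n → ℝ))) :=
      measurePreserving_piFinSuccAbove (fun _ => (volume : Measure ℝ)) 0
    have hsplit : ∀ f : Fin (n + 1) → Set ℝ,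
        (univ.pi f : Set (Fin (n + 1) → ℝ))
          = e ⁻¹' ((f 0) ×ˢ (univ.pi fun i : Fin n => f i.succ)) := by
      intro f; ext y
      simp [he, MeasurableEquiv.piFinSuccAbove, Fin.forall_fin_succ, Fin.removeNth,
        Fin.succAbove_zero, Fin.tail]
    set Ia : Fin N → Set ℝ := fun j => Ioo (x j 0 - a * r j 0 / 2) (x j 0 + a * r j 0 / 2) with hIa
    set I1 : Fin N → Set ℝ := fun j => Ioo (x j 0 - r j 0 / 2) (x j 0 + r j 0 / 2) with hI1
    set Ba : Fin N → Set (Fin n → ℝ) := fun j =>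
      univ.pi fun i : Fin n => Ioo (x j i.succ - a * r j i.succ / 2)
        (x j i.succ + a * r j i.succ / 2) with hBa
    set B1 : Fin N → Set (Fin n → ℝ) := fun j =>
      univ.pi fun i : Fin n => Ioo (x j i.succ - r j i.succ / 2)
        (x j i.succ + r j i.succ / 2) with hB1
    set T1 := ⋃ j, ⋃ _ : P j, Ia j ×ˢ Ba j with hT1d
    set T2 := ⋃ j, ⋃ _ : P j, I1 j ×ˢ Ba j with hT2d
    set T3 := ⋃ j, ⋃ _ : P j, I1 j ×ˢ B1 j with hT3d
    have hT1 : MeasurableSet T1 :=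
      MeasurableSet.iUnion fun j => MeasurableSet.iUnion fun _ =>
        measurableSet_Ioo.prod (MeasurableSet.univ_pi fun i => measurableSet_Ioo)
    have hT2 : MeasurableSet T2 :=
      MeasurableSet.iUnion fun j => MeasurableSet.iUnion fun _ =>
        measurableSet_Ioo.prod (MeasurableSet.univ_pi fun i => measurableSet_Ioo)
    have hT3 : MeasurableSet T3 :=
      MeasurableSet.iUnion fun j => MeasurableSet.iUnion fun _ =>
        measurableSet_Ioo.prod (MeasurableSet.univ_pi fun i => measurableSet_Ioo)
    have hm1 : volume (⋃ j, ⋃ _ : P j,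
        univ.pi fun i => Ioo (x j i - a * r j i / 2) (x j i + a * r j i / 2))
        = ((volume : Measure ℝ).prod (volume : Measure (Fin n → ℝ))) T1 := by
      have : (⋃ j, ⋃ _ : P j,
          univ.pi fun i => Ioo (x j i - a * r j i / 2) (x j i + a * r j i / 2))
          = e ⁻¹' T1 := by
        rw [hT1d]
        simp only [Set.preimage_iUnion]
        exact Set.iUnion_congr fun j => Set.iUnion_congr fun _ => hsplit _
      rw [this, hmp.measure_preimage hT1.nullMeasurableSet]
    have hm3 : volume (⋃ j, ⋃ _ : P j,
        univ.pi fun i => Ioo (x j i - r j i / 2) (x j i + r j i / 2))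
        = ((volume : Measure ℝ).prod (volume : Measure (Fin n → ℝ))) T3 := by
      have : (⋃ j, ⋃ _ : P j,
          univ.pi fun i => Ioo (x j i - r j i / 2) (x j i + r j i / 2))
          = e ⁻¹' T3 := by
        rw [hT3d]
        simp only [Set.preimage_iUnion]
        exact Set.iUnion_congr fun j => Set.iUnion_congr fun _ => hsplit _
      rw [this, hmp.measure_preimage hT3.nullMeasurableSet]
    have step1 : ((volume : Measure ℝ).prod volume) T1
        ≤ ENNReal.ofReal a * ((volume : Measure ℝ).prod volume) T2 := by
      rw [Measure.prod_apply_symm hT1, Measure.prod_apply_symm hT2,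
        ← lintegral_const_mul' _ _ ENNReal.ofReal_ne_top]
      refine lintegral_mono fun y => ?_
      have hsec1 : ((fun t => (t, y)) ⁻¹' T1) = ⋃ j, ⋃ _ : (P j ∧ y ∈ Ba j), Ia j := by
        ext t; simp only [hT1d, Set.preimage_iUnion, Set.mem_iUnion, Set.mem_preimage,
          Set.mem_prod]; tauto
      have hsec2 : ((fun t => (t, y)) ⁻¹' T2) = ⋃ j, ⋃ _ : (P j ∧ y ∈ Ba j), I1 j := by
        ext t; simp only [hT2d, Set.preimage_iUnion, Set.mem_iUnion, Set.mem_preimage,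
          Set.mem_prod]; tauto
      rw [hsec1, hsec2]
      exact lemA_pred a ha (fun j => x j 0) (fun j => r j 0) (fun j => P j ∧ y ∈ Ba j)
    have step2 : ((volume : Measure ℝ).prod volume) T2
        ≤ ENNReal.ofReal (a ^ n) * ((volume : Measure ℝ).prod volume) T3 := by
      rw [Measure.prod_apply hT2, Measure.prod_apply hT3,
        ← lintegral_const_mul' _ _ ENNReal.ofReal_ne_top]
      refine lintegral_mono fun t => ?_
      have hsec1 : (Prod.mk t ⁻¹' T2) = ⋃ j, ⋃ _ : (P j ∧ t ∈ I1 j), Ba j := by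
        ext y; simp only [hT2d, Set.preimage_iUnion, Set.mem_iUnion, Set.mem_preimage,
          Set.mem_prod]; tauto
      have hsec2 : (Prod.mk t ⁻¹' T3) = ⋃ j, ⋃ _ : (P j ∧ t ∈ I1 j), B1 j := by
        ext y; simp only [hT3d, Set.preimage_iUnion, Set.mem_iUnion, Set.mem_preimage,
          Set.mem_prod]; tauto
      rw [hsec1, hsec2]
      exact IH N (fun j i => x j i.succ) (fun j i => r j i.succ) (fun j => P j ∧ t ∈ I1 j)
    calc volume (⋃ j, ⋃ _ : P j,
          univ.pi fun i => Ioo (x j i - a * r j i / 2) (x j i + a * r j i / 2))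
        = ((volume : Measure ℝ).prod volume) T1 := hm1
      _ ≤ ENNReal.ofReal a * ((volume : Measure ℝ).prod volume) T2 := step1
      _ ≤ ENNReal.ofReal a * (ENNReal.ofReal (a ^ n) * ((volume : Measure ℝ).prod volume) T3) :=
          mul_le_mul_right step2 _
      _ = ENNReal.ofReal (a ^ (n + 1)) * ((volume : Measure ℝ).prod volume) T3 := by
          rw [← mul_assoc, ← ENNReal.ofReal_mul (by linarith), ← pow_succ']
      _ = ENNReal.ofReal (a ^ (n + 1)) * volume (⋃ j, ⋃ _ : P j,
          univ.pi fun i => Ioo (x j i - r j i / 2) (x j i + r j i / 2)) := by rw [hm3]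

/-- For finite unions of cubes, `|⋃ Q(xⱼ, a rⱼ)| ≤ aⁿ |⋃ Q(xⱼ, rⱼ)|`. -/
theorem stmt3 (n : ℕ) (N : ℕ) (x : Fin N → EuclideanSpace ℝ (Fin n)) (r : Fin N → ℝ)
    (hr : ∀ j, 0 < r j) (a : ℝ) (ha : 1 < a) :
    volume (⋃ j, cube (x j) (a * r j)) ≤
      ENNReal.ofReal (a ^ n) * volume (⋃ j, cube (x j) (r j)) := by
  have ha1 : (1 : ℝ) ≤ a := ha.le
  set e := (MeasurableEquiv.toLp 2 (Fin n → ℝ)).symm with he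
  have hmp : MeasurePreserving e := EuclideanSpace.volume_preserving_symm_measurableEquiv_toLp (Fin n)
  have hcube : ∀ (z : EuclideanSpace ℝ (Fin n)) (ρ : ℝ),
      cube z ρ = e ⁻¹' (univ.pi fun i => Ioo (z i - ρ / 2) (z i + ρ / 2)) := by
    intro z ρ
    ext y
    simp only [cube, mem_setOf_eq, Set.mem_preimage, Set.mem_pi, Set.mem_univ, forall_true_left,
      mem_Ioo, abs_lt, he, MeasurableEquiv.coe_toLp_symm]
    constructor <;> intro h i <;> obtain ⟨h1, h2⟩ := h i <;> constructor <;> linarith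
  have hma : volume (⋃ j, cube (x j) (a * r j))
      = volume (⋃ j, ⋃ _ : True,
        univ.pi fun i => Ioo (x j i - a * r j / 2) (x j i + a * r j / 2)) := by
    have : (⋃ j, cube (x j) (a * r j)) = e ⁻¹' (⋃ j, ⋃ _ : True,
        univ.pi fun i => Ioo (x j i - a * r j / 2) (x j i + a * r j / 2)) := by
      simp only [Set.iUnion_true, Set.preimage_iUnion]
      exact Set.iUnion_congr fun j => hcube (x j) (a * r j)
    rw [this, hmp.measure_preimage]
    exact (MeasurableSet.iUnion fun j => MeasurableSet.iUnion fun _ =>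
      MeasurableSet.univ_pi fun i => measurableSet_Ioo).nullMeasurableSet
  have hm1 : volume (⋃ j, cube (x j) (r j))
      = volume (⋃ j, ⋃ _ : True,
        univ.pi fun i => Ioo (x j i - r j / 2) (x j i + r j / 2)) := by
    have : (⋃ j, cube (x j) (r j)) = e ⁻¹' (⋃ j, ⋃ _ : True,
        univ.pi fun i => Ioo (x j i - r j / 2) (x j i + r j / 2)) := by
      simp only [Set.iUnion_true, Set.preimage_iUnion]
      exact Set.iUnion_congr fun j => hcube (x j) (r j)
    rw [this, hmp.measure_preimage]
    exact (MeasurableSet.iUnion fun j => MeasurableSet.iUnion fun _ =>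
      MeasurableSet.univ_pi fun i => measurableSet_Ioo).nullMeasurableSet
  rw [hma, hm1]
  exact pi_dilate a ha1 n N (fun j i => x j i) (fun j _ => r j) (fun _ => True)
end
end

section
/- Let Q₁ = Q(x₁,r₁), …, Q_N = Q(x_N, r_N) be cubes with r₁ ≥ r₂ ≥ ⋯ ≥ r_N, and define the disjointification F_j = Q(x_j, r_j) \ ⋃_{k<j} F_k and similarly F_j* = Q(x_j, a r_j) \ ⋃_{k<j} F_k* for a fixed a > 1. Then for each j, F_j* is contained in the dilate {a(y - x_j) + x_j : y ∈ F_j} of F_j. -/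
open MeasureTheory Filter Set
open scoped ENNReal

noncomputable section

/-- Each disjointified dilated piece `Fⱼ*` is contained in the dilate of `Fⱼ` about `xⱼ`. -/
theorem stmt4 (n : ℕ) (N : ℕ) (x : Fin N → EuclideanSpace ℝ (Fin n)) (r : Fin N → ℝ)
    (hrpos : ∀ j, 0 < r j) (hmono : ∀ j k : Fin N, j ≤ k → r k ≤ r j)
    (a : ℝ) (ha : 1 < a)
    (F Fstar : Fin N → Set (EuclideanSpace ℝ (Fin n)))
    (hF : ∀ j, F j = cube (x j) (r j) \ ⋃ k, ⋃ (_ : k < j), F k)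
    (hFstar : ∀ j, Fstar j = cube (x j) (a * r j) \ ⋃ k, ⋃ (_ : k < j), Fstar k) :
    ∀ j, Fstar j ⊆ (fun y => a • (y - x j) + x j) '' F j := by
  intro j y hy
  have ha0 : (0:ℝ) < a := lt_trans one_pos ha
  rw [hFstar j] at hy
  obtain ⟨hycube, hynot⟩ := hy
  set z : EuclideanSpace ℝ (Fin n) := x j + a⁻¹ • (y - x j) with hz
  have hzi : ∀ i, z i - x j i = a⁻¹ * (y i - x j i) := by
    intro i
    simp [hz, PiLp.add_apply, PiLp.smul_apply, PiLp.sub_apply]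
  refine ⟨z, ?_, ?_⟩
  · rw [hF j]
    constructor
    · intro i
      rw [hzi i, abs_mul, abs_of_pos (by positivity : (0:ℝ) < a⁻¹)]
      have h := hycube i
      calc a⁻¹ * |y i - x j i| < a⁻¹ * (a * r j / 2) := by
            exact mul_lt_mul_of_pos_left h (by positivity)
        _ = r j / 2 := by field_simp
    · intro hzmem
      simp only [mem_iUnion] at hzmem
      obtain ⟨k, hk, hzk⟩ := hzmem
      rw [hF k] at hzk
      have hzcube := hzk.1
      -- show y ∈ cube (x k) (a * r k)
      have hrk : r j ≤ r k := hmono k j hk.le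
      have hycubek : y ∈ cube (x k) (a * r k) := by
        intro i
        have h1 : y i - z i = (1 - a⁻¹) * (y i - x j i) := by
          have := hzi i; nlinarith [this]
        have h2 : |y i - z i| ≤ (a - 1) * r k / 2 := by
          rw [h1, abs_mul, abs_of_nonneg (by
            have : a⁻¹ ≤ 1 := by
              rw [inv_le_one₀ ha0]; linarith
            linarith : (0:ℝ) ≤ 1 - a⁻¹)]
          have h3 : |y i - x j i| ≤ a * r j / 2 := (hycube i).le
          have h4 : (1 - a⁻¹) * (a * r j / 2) = (a - 1) * r j / 2 := by
            field_simp
          calc (1 - a⁻¹) * |y i - x j i| ≤ (1 - a⁻¹) * (a * r j / 2) := by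
                apply mul_le_mul_of_nonneg_left h3
                have : a⁻¹ ≤ 1 := by rw [inv_le_one₀ ha0]; linarith
                linarith
            _ = (a - 1) * r j / 2 := h4
            _ ≤ (a - 1) * r k / 2 := by nlinarith
        have h5 : |z i - x k i| < r k / 2 := hzcube i
        calc |y i - x k i| ≤ |y i - z i| + |z i - x k i| := by
              have := abs_sub_abs_le_abs_sub (y i - x k i) (z i - x k i)
              have := abs_add_le (y i - z i) (z i - x k i)
              have heq : y i - x k i = (y i - z i) + (z i - x k i) := by ring
              rw [heq]; exact abs_add_le _ _
          _ < (a - 1) * r k / 2 + r k / 2 := by linarith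
          _ = a * r k / 2 := by ring
      -- y ∉ Fstar k, so y ∈ some Fstar l with l < k < j, contradiction
      have hynk : y ∉ Fstar k := by
        intro hyk
        exact hynot (mem_iUnion.2 ⟨k, mem_iUnion.2 ⟨hk, hyk⟩⟩)
      rw [hFstar k] at hynk
      have : y ∈ ⋃ l, ⋃ (_ : l < k), Fstar l := by
        by_contra h
        exact hynk ⟨hycubek, h⟩
      simp only [mem_iUnion] at this
      obtain ⟨l, hl, hyl⟩ := this
      exact hynot (mem_iUnion.2 ⟨l, mem_iUnion.2 ⟨lt_trans hl hk, hyl⟩⟩)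
  · -- a • (z - x j) + x j = y
    simp only [hz]
    rw [add_sub_cancel_left, smul_smul, mul_inv_cancel₀ (ne_of_gt ha0), one_smul]
    abel
end
end

section
/- The function h(x) = (1/x)(1+x)^{1 + 1/x} satisfies h(x) ≤ 4 for all x ∈ [1, ∞). -/
open MeasureTheory Filter Set
open scoped ENNReal

noncomputable section

/-- The function `h(x) = (1/x)(1+x)^{1+1/x}` is bounded by `4` on `[1, ∞)`. -/
theorem stmt7 : ∀ x : ℝ, 1 ≤ x → (1 / x) * (1 + x) ^ (1 + 1 / x) ≤ 4 := by
  intro x hx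
  have hx0 : (0:ℝ) < x := lt_of_lt_of_le one_pos hx
  have h1x : (0:ℝ) < 1 + x := by linarith
  -- key: 1 + x ≤ 2 ^ x
  have hkey : 1 + x ≤ (2:ℝ) ^ x := by
    have := one_add_mul_self_le_rpow_one_add (by norm_num : (-1:ℝ) ≤ 1) hx
    norm_num at this; linarith [this]
  -- hence (1+x)^(1/x) ≤ 2
  have h2 : (1 + x) ^ (1 / x) ≤ 2 := by
    have := Real.rpow_le_rpow (le_of_lt h1x) hkey (by positivity : (0:ℝ) ≤ 1 / x)
    rwa [← Real.rpow_mul (by norm_num), mul_one_div, div_self (ne_of_gt hx0),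
      Real.rpow_one] at this
  have hsplit : (1 + x) ^ (1 + 1 / x) = (1 + x) * (1 + x) ^ (1 / x) := by
    rw [Real.rpow_add h1x, Real.rpow_one]
  rw [hsplit]
  have hfrac : (1 + x) / x ≤ 2 := by
    rw [div_le_iff₀ hx0]; linarith
  calc (1 / x) * ((1 + x) * (1 + x) ^ (1 / x))
      = ((1 + x) / x) * (1 + x) ^ (1 / x) := by ring
    _ ≤ 2 * 2 := by
        apply mul_le_mul hfrac h2 (by positivity) (by norm_num)
    _ = 4 := by norm_num
end
end
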